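/- (Lemma 4.1.) Let n ≥ 2, let Q = diag(q_1,…,q_n) with q_i > 0, let L_c ∈ ℝ^{n×n} be the Laplacian of a connected undirected graph (symmetric, nonpositive off-diagonal entries, L_c𝟙 = 0, ker(L_c) = span{𝟙}), and let B ∈ ℝ^{n×m} with ker(Bᵀ) = span{𝟙}. Let γ_c, γ_e, γ_p, γ_l > 0, set γ := γ_p²γ_c/γ_l, let d, x̄_s, r ∈ ℝ^n, d̃ := d − x̄_s − Q^{-1}r, Q̄ := Q^{-1}𝟙𝟙ᵀQ^{-1}/(𝟙ᵀQ^{-1}𝟙) − Q^{-1}, Φ := −L_cQ + (1/n)𝟙𝟙ᵀ (the matrix γQ̄ + Φ being invertible), and let x̄_e ∈ ℝ^m be any vector with γ_e B x̄_e = −Q̄Q d̃. Define x̂_p := (γ/γ_p) Q (γQ̄ + Φ)^{-1} Q̄² Q d̃ and x̂ := γ_c (𝟙𝟙ᵀQ^{-1}/(𝟙ᵀQ^{-1}𝟙)) (I − γ(γQ̄ + Φ)^{-1} Q̄) Q̄ Q d̃. Then there exists x̂_e ∈ ℝ^m such that the triple (x̂, x̂_e, x̂_p) satisfies: (i) Bᵀ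 x̂ = 0; (ii) −γ_e B x̂_e + γ_p Q^{-1} x̂_p = 0; (iii) −γ_p Q^{-1} x̂ − γ_l L_c x̂_p − γ_p γ_c γ_e Q^{-1} B (x̂_e + x̄_e) = 0. -/

import Mathlib

open Matrix Filter

/-- Euclidean norm on `Fin k → ℝ`. -/
noncomputable def euclNorm {k : ℕ} (v : Fin k → ℝ) : ℝ :=
  ‖(WithLp.equiv 2 (Fin k → ℝ)).symm v‖

/-- Operator norm on matrices induced by the Euclidean norms. -/
noncomputable def matOpNorm {k l : ℕ} (A : Matrix (Fin k) (Fin l) ℝ) : ℝ :=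
  ‖LinearMap.toContinuousLinearMap (Matrix.toEuclideanLin A)‖

/-- The all-ones vector `𝟙`. -/
def onesVec (k : ℕ) : Fin k → ℝ := fun _ => 1

/-- The all-ones matrix `𝟙𝟙ᵀ`. -/
def onesMat (k : ℕ) : Matrix (Fin k) (Fin k) ℝ := Matrix.of fun _ _ => 1

/-- Scalar saturation: `sat(y; l, u) = l` if `y ≤ l`, `u` if `u ≤ y`, and `y` otherwise. -/
noncomputable def sat1 (y l u : ℝ) : ℝ := if y ≤ l then l else if u ≤ y then u else y

/-- Componentwise (multidimensional) saturation function. -/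
noncomputable def satv {k : ℕ} (x xm xp : Fin k → ℝ) : Fin k → ℝ :=
  fun i => sat1 (x i) (xm i) (xp i)

lemma lap_psd {n : ℕ} (Lc : Matrix (Fin n) (Fin n) ℝ) (hsymm : Lc.IsSymm)
    (hoff : ∀ i j, i ≠ j → Lc i j ≤ 0) (hrow : ∀ i, ∑ j, Lc i j = 0)
    (z : Fin n → ℝ) : 0 ≤ z ⬝ᵥ (Lc *ᵥ z) := by
  have hcol : ∀ j, ∑ i, Lc i j = 0 := by
    intro j
    have : ∑ i, Lc i j = ∑ i, Lc j i :=
      Finset.sum_congr rfl fun i _ => (hsymm.apply i j).symm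
    rw [this, hrow j]
  have h1 : z ⬝ᵥ (Lc *ᵥ z) = ∑ i, ∑ j, z i * (Lc i j * z j) := by
    simp [dotProduct, Matrix.mulVec, Finset.mul_sum]
  have h2 : ∀ i, ∑ j, (1/2 : ℝ) * (Lc i j * z i ^ 2) = 0 := by
    intro i
    calc ∑ j, (1/2:ℝ) * (Lc i j * z i ^ 2) = ∑ j, (1/2 * z i ^ 2) * Lc i j :=
          Finset.sum_congr rfl fun j _ => by ring
      _ = (1/2 * z i ^ 2) * ∑ j, Lc i j := by rw [Finset.mul_sum]
      _ = 0 := by rw [hrow i, mul_zero]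
  have h3 : ∑ i, ∑ j, (1/2 : ℝ) * (Lc i j * z j ^ 2) = 0 := by
    rw [Finset.sum_comm]
    refine Finset.sum_eq_zero fun j _ => ?_
    calc ∑ i, (1/2:ℝ) * (Lc i j * z j ^ 2) = ∑ i, (1/2 * z j ^ 2) * Lc i j :=
          Finset.sum_congr rfl fun i _ => by ring
      _ = (1/2 * z j ^ 2) * ∑ i, Lc i j := by rw [Finset.mul_sum]
      _ = 0 := by rw [hcol j, mul_zero]
  have key : z ⬝ᵥ (Lc *ᵥ z) = ∑ i, ∑ j, (-(Lc i j)) * (z i - z j)^2 / 2 := by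
    have expand : ∀ i j, (-(Lc i j)) * (z i - z j)^2 / 2
        = z i * (Lc i j * z j) - (1/2) * (Lc i j * z i ^ 2) - (1/2) * (Lc i j * z j ^ 2) := by
      intro i j; ring
    calc z ⬝ᵥ (Lc *ᵥ z) = ∑ i, ∑ j, z i * (Lc i j * z j) := h1
      _ = (∑ i, ∑ j, z i * (Lc i j * z j)) - (∑ i, ∑ j, (1/2:ℝ) * (Lc i j * z i ^ 2))
            - (∑ i, ∑ j, (1/2:ℝ) * (Lc i j * z j ^ 2)) := by
          rw [Finset.sum_eq_zero (fun i _ => h2 i), h3, sub_zero, sub_zero]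
      _ = ∑ i, ∑ j, (-(Lc i j)) * (z i - z j)^2 / 2 := by
          rw [← Finset.sum_sub_distrib, ← Finset.sum_sub_distrib]
          refine Finset.sum_congr rfl fun i _ => ?_
          rw [← Finset.sum_sub_distrib, ← Finset.sum_sub_distrib]
          exact Finset.sum_congr rfl fun j _ => (expand i j).symm
  rw [key]
  refine Finset.sum_nonneg fun i _ => Finset.sum_nonneg fun j _ => ?_
  by_cases hij : i = j
  · subst hij; simp
  · have := hoff i j hij
    nlinarith [sq_nonneg (z i - z j)]

lemma exists_preimage_of_ones_orth {n m : ℕ} (B : Matrix (Fin n) (Fin m) ℝ)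
    (hB : LinearMap.ker Bᵀ.mulVecLin = Submodule.span ℝ {onesVec n})
    (w : Fin n → ℝ) (hw : onesVec n ⬝ᵥ w = 0) : ∃ x : Fin m → ℝ, B *ᵥ x = w := by
  classical
  set T : EuclideanSpace ℝ (Fin n) ≃ₗ[ℝ] (Fin n → ℝ) := WithLp.linearEquiv 2 ℝ (Fin n → ℝ) with hT
  have hinner : ∀ a b : EuclideanSpace ℝ (Fin n), inner ℝ a b = (T a) ⬝ᵥ (T b) := by
    intro a b
    simp [PiLp.inner_apply, RCLike.inner_apply, dotProduct, hT, WithLp.linearEquiv,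
      mul_comm]
  have hBT1 : Bᵀ *ᵥ onesVec n = 0 := by
    have h1 : onesVec n ∈ LinearMap.ker Bᵀ.mulVecLin := by
      rw [hB]; exact Submodule.mem_span_singleton_self _
    rw [LinearMap.mem_ker, Matrix.mulVecLin_apply] at h1
    exact h1
  set V : Submodule ℝ (EuclideanSpace ℝ (Fin n)) :=
    (LinearMap.range B.mulVecLin).comap (T : EuclideanSpace ℝ (Fin n) →ₗ[ℝ] (Fin n → ℝ)) with hV
  have hmemV : ∀ z : EuclideanSpace ℝ (Fin n), z ∈ V ↔ ∃ x, B *ᵥ x = T z := by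
    intro z
    simp [hV, LinearMap.mem_range, Matrix.mulVecLin_apply]
  have hVorth : Vᗮ = (Submodule.span ℝ {onesVec n}).comap
      (T : EuclideanSpace ℝ (Fin n) →ₗ[ℝ] (Fin n → ℝ)) := by
    ext z
    rw [Submodule.mem_orthogonal, Submodule.mem_comap]
    constructor
    · intro h
      have hz : ∀ x : Fin m → ℝ, (B *ᵥ x) ⬝ᵥ (T z) = 0 := by
        intro x
        have hx : T.symm (B *ᵥ x) ∈ V := by
          rw [hmemV]; exact ⟨x, by rw [T.apply_symm_apply]⟩
        have h0 := h _ hx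
        rwa [hinner, T.apply_symm_apply] at h0
      have hker : Bᵀ *ᵥ T z = 0 := by
        have h0 := hz (Bᵀ *ᵥ T z)
        rw [dotProduct_comm, Matrix.dotProduct_mulVec, ← Matrix.mulVec_transpose,
          dotProduct_self_eq_zero] at h0
        exact h0
      have hmem : T z ∈ LinearMap.ker Bᵀ.mulVecLin := by
        rw [LinearMap.mem_ker, Matrix.mulVecLin_apply]; exact hker
      rwa [hB] at hmem
    · intro h u hu
      rw [hmemV] at hu
      obtain ⟨x, hx⟩ := hu
      obtain ⟨c, hc⟩ := Submodule.mem_span_singleton.mp h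
      simp only [LinearEquiv.coe_coe] at hc
      rw [hinner, ← hx, ← hc, dotProduct_smul, dotProduct_comm, Matrix.dotProduct_mulVec,
        ← Matrix.mulVec_transpose, hBT1, zero_dotProduct, smul_zero]
  have hVV : V = ((Submodule.span ℝ {onesVec n}).comap
      (T : EuclideanSpace ℝ (Fin n) →ₗ[ℝ] (Fin n → ℝ)))ᗮ := by
    rw [← hVorth, Submodule.orthogonal_orthogonal]
  have hwmem : T.symm w ∈ V := by
    rw [hVV, Submodule.mem_orthogonal]
    intro u hu
    rw [Submodule.mem_comap] at hu
    obtain ⟨c, hc⟩ := Submodule.mem_span_singleton.mp hu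
    simp only [LinearEquiv.coe_coe] at hc
    rw [hinner, T.apply_symm_apply, ← hc, smul_dotProduct, hw, smul_zero]
  rw [hmemV, T.apply_symm_apply] at hwmem
  exact hwmem

/-- Lemma 4.1: existence of `x̂_e` such that `(x̂, x̂_e, x̂_p)` solves the
steady-state-deviation equations (A.hatsss) of the constrained closed loop. -/
theorem lemma41_hat_solutions_exist {n m : ℕ} (hn : 2 ≤ n)
    (q : Fin n → ℝ) (hq : ∀ i, 0 < q i)
    (Lc : Matrix (Fin n) (Fin n) ℝ) (hsymm : Lc.IsSymm)
    (hoff : ∀ i j, i ≠ j → Lc i j ≤ 0)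
    (hLc1 : Lc *ᵥ onesVec n = 0)
    (hkerLc : LinearMap.ker Lc.mulVecLin = Submodule.span ℝ {onesVec n})
    (B : Matrix (Fin n) (Fin m) ℝ)
    (hB : LinearMap.ker Bᵀ.mulVecLin = Submodule.span ℝ {onesVec n})
    (γc γe γp γl : ℝ) (hγc : 0 < γc) (hγe : 0 < γe) (hγp : 0 < γp) (hγl : 0 < γl)
    (γ : ℝ) (hγ : γ = γp ^ 2 * γc / γl)
    (d xbars r : Fin n → ℝ)
    (Q Qinv Qbar Φ : Matrix (Fin n) (Fin n) ℝ)
    (hQ : Q = Matrix.diagonal q)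
    (hQinv : Qinv = Matrix.diagonal fun i => (q i)⁻¹)
    (dtil : Fin n → ℝ) (hdtil : dtil = d - xbars - Qinv *ᵥ r)
    (hQbar : Qbar =
      (onesVec n ⬝ᵥ (Qinv *ᵥ onesVec n))⁻¹ • (Qinv * onesMat n * Qinv) - Qinv)
    (hΦ : Φ = -(Lc * Q) + (n : ℝ)⁻¹ • onesMat n)
    (xbare : Fin m → ℝ)
    (hxbare : γe • (B *ᵥ xbare) = -((Qbar * Q) *ᵥ dtil))
    (xhatp xhat : Fin n → ℝ)
    (hxhatp : xhatp =
      (γ / γp) • (Q *ᵥ ((γ • Qbar + Φ)⁻¹ *ᵥ ((Qbar * Qbar * Q) *ᵥ dtil))))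
    (hxhat : xhat = γc • ((onesVec n ⬝ᵥ (Qinv *ᵥ onesVec n))⁻¹ •
      ((onesMat n * Qinv) *ᵥ
        ((1 - γ • ((γ • Qbar + Φ)⁻¹ * Qbar)) *ᵥ ((Qbar * Q) *ᵥ dtil))))) :
    ∃ xhate : Fin m → ℝ,
      Bᵀ *ᵥ xhat = 0 ∧
      -(γe • (B *ᵥ xhate)) + γp • (Qinv *ᵥ xhatp) = 0 ∧
      -(γp • (Qinv *ᵥ xhat)) - γl • (Lc *ᵥ xhatp)
        - (γp * γc * γe) • (Qinv *ᵥ (B *ᵥ (xhate + xbare))) = 0 := by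
  classical
  have hn0 : 0 < n := lt_of_lt_of_le two_pos hn
  haveI : Nonempty (Fin n) := Fin.pos_iff_nonempty.mp hn0
  have hnR : (n : ℝ) ≠ 0 := Nat.cast_ne_zero.mpr hn0.ne'
  have hγp' : γp ≠ 0 := ne_of_gt hγp
  have hγl' : γl ≠ 0 := ne_of_gt hγl
  have hγe' : γe ≠ 0 := ne_of_gt hγe
  have hγc' : γc ≠ 0 := ne_of_gt hγc
  set A : Matrix (Fin n) (Fin n) ℝ := γ • Qbar + Φ with hA
  set s : ℝ := onesVec n ⬝ᵥ (Qinv *ᵥ onesVec n) with hsdef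
  have hQQinv : Q * Qinv = 1 := by
    rw [hQ, hQinv, Matrix.diagonal_mul_diagonal]
    have h : (fun i => q i * (q i)⁻¹) = fun _ : Fin n => (1:ℝ) :=
      funext fun i => mul_inv_cancel₀ (hq i).ne'
    rw [h, Matrix.diagonal_one]
  have hQinvQ : Qinv * Q = 1 := by
    rw [hQ, hQinv, Matrix.diagonal_mul_diagonal]
    have h : (fun i => (q i)⁻¹ * q i) = fun _ : Fin n => (1:ℝ) :=
      funext fun i => inv_mul_cancel₀ (hq i).ne'
    rw [h, Matrix.diagonal_one]
  have hs : s = ∑ i, (q i)⁻¹ := by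
    simp [hsdef, hQinv, Matrix.mulVec_diagonal, dotProduct, onesVec]
  have hspos : 0 < s := by
    rw [hs]
    exact Finset.sum_pos (fun i _ => inv_pos.mpr (hq i)) Finset.univ_nonempty
  have hsne : s ≠ 0 := ne_of_gt hspos
  have honesMul : ∀ y : Fin n → ℝ, onesMat n *ᵥ y = (onesVec n ⬝ᵥ y) • onesVec n := by
    intro y; funext i
    simp [onesMat, Matrix.mulVec, dotProduct, onesVec]
  have hQbarVec : ∀ x : Fin n → ℝ,
      Qbar *ᵥ x = (s⁻¹ * (onesVec n ⬝ᵥ (Qinv *ᵥ x))) • (Qinv *ᵥ onesVec n)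
        - Qinv *ᵥ x := by
    intro x
    rw [hQbar, Matrix.sub_mulVec, Matrix.smul_mulVec, ← Matrix.mulVec_mulVec,
      ← Matrix.mulVec_mulVec, honesMul, Matrix.mulVec_smul, smul_smul]
  have hovQbar : ∀ x : Fin n → ℝ, onesVec n ⬝ᵥ (Qbar *ᵥ x) = 0 := by
    intro x
    rw [hQbarVec, dotProduct_sub, dotProduct_smul, ← hsdef, smul_eq_mul]
    field_simp
    ring
  have hrow : ∀ i, ∑ j, Lc i j = 0 := by
    intro i
    have h := congrFun hLc1 i
    simpa [Matrix.mulVec, dotProduct, onesVec] using h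
  have hovLc : onesVec n ᵥ* Lc = 0 := by
    funext j
    have hcol : ∑ i, Lc i j = 0 := by
      have h : ∑ i, Lc i j = ∑ i, Lc j i :=
        Finset.sum_congr rfl fun i _ => (hsymm.apply i j).symm
      rw [h, hrow j]
    simpa [Matrix.vecMul, dotProduct, onesVec] using hcol
  have hovov : onesVec n ⬝ᵥ onesVec n = (n : ℝ) := by
    simp [dotProduct, onesVec]
  have hovΦ : ∀ x : Fin n → ℝ, onesVec n ⬝ᵥ (Φ *ᵥ x) = onesVec n ⬝ᵥ x := by
    intro x
    rw [hΦ, Matrix.add_mulVec, Matrix.neg_mulVec, dotProduct_add, dotProduct_neg,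
      Matrix.smul_mulVec, dotProduct_smul, honesMul, dotProduct_smul, hovov,
      Matrix.dotProduct_mulVec, ← Matrix.vecMul_vecMul, hovLc, Matrix.zero_vecMul,
      zero_dotProduct, neg_zero, zero_add,
      smul_eq_mul, smul_eq_mul]
    field_simp
  have hovA : ∀ x, onesVec n ⬝ᵥ (A *ᵥ x) = onesVec n ⬝ᵥ x := by
    intro x
    rw [hA, Matrix.add_mulVec, Matrix.smul_mulVec, dotProduct_add,
      dotProduct_smul, hovQbar, smul_zero, zero_add, hovΦ]
  have hQdot : ∀ x y : Fin n → ℝ, (Q *ᵥ x) ⬝ᵥ y = x ⬝ᵥ (Q *ᵥ y) := by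
    intro x y
    simp only [hQ, dotProduct, Matrix.mulVec_diagonal]
    exact Finset.sum_congr rfl fun i _ => by ring
  have hQQinvVec : ∀ x, Q *ᵥ (Qinv *ᵥ x) = x := by
    intro x; rw [Matrix.mulVec_mulVec, hQQinv, Matrix.one_mulVec]
  have hQinvQVec : ∀ x, Qinv *ᵥ (Q *ᵥ x) = x := by
    intro x; rw [Matrix.mulVec_mulVec, hQinvQ, Matrix.one_mulVec]
  have hdotnn : ∀ x : Fin n → ℝ, 0 ≤ x ⬝ᵥ x := fun x =>
    Finset.sum_nonneg fun i _ => mul_self_nonneg (x i)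
  -- invertibility of A
  have hker : ∀ x : Fin n → ℝ, A *ᵥ x = 0 → x = 0 := by
    intro x hx
    have c0 : onesVec n ⬝ᵥ x = 0 := by
      have h := hovA x
      rw [hx, dotProduct_zero] at h
      exact h.symm
    have hq0 : (Q *ᵥ x) ⬝ᵥ (A *ᵥ x) = 0 := by rw [hx, dotProduct_zero]
    have hterm1 : (Q *ᵥ x) ⬝ᵥ (Qbar *ᵥ x) = -(x ⬝ᵥ x) := by
      rw [hQbarVec, dotProduct_sub, dotProduct_smul]
      have e1 : (Q *ᵥ x) ⬝ᵥ (Qinv *ᵥ onesVec n) = 0 := by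
        rw [hQdot, hQQinvVec, dotProduct_comm]
        exact c0
      have e2 : (Q *ᵥ x) ⬝ᵥ (Qinv *ᵥ x) = x ⬝ᵥ x := by
        rw [hQdot, hQQinvVec]
      rw [e1, e2, smul_zero, zero_sub]
    have hterm2 : (Q *ᵥ x) ⬝ᵥ (Φ *ᵥ x) = -((Q *ᵥ x) ⬝ᵥ (Lc *ᵥ (Q *ᵥ x))) := by
      rw [hΦ, Matrix.add_mulVec, Matrix.neg_mulVec, Matrix.smul_mulVec, honesMul,
        c0, zero_smul, smul_zero, add_zero, ← Matrix.mulVec_mulVec, dotProduct_neg]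
    have hexpand : (Q *ᵥ x) ⬝ᵥ (A *ᵥ x)
        = γ * ((Q *ᵥ x) ⬝ᵥ (Qbar *ᵥ x)) + (Q *ᵥ x) ⬝ᵥ (Φ *ᵥ x) := by
      rw [hA, Matrix.add_mulVec, Matrix.smul_mulVec, dotProduct_add,
        dotProduct_smul, smul_eq_mul]
    have hγpos : 0 < γ := by rw [hγ]; positivity
    have hLz := lap_psd Lc hsymm hoff hrow (Q *ᵥ x)
    have hxx : x ⬝ᵥ x = 0 := by
      rw [hexpand, hterm1, hterm2] at hq0
      nlinarith [hdotnn x]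
    exact dotProduct_self_eq_zero.mp hxx
  have hinj : Function.Injective A.mulVec := by
    intro x y hxy
    have h := hker (x - y) (by rw [Matrix.mulVec_sub, hxy, sub_self])
    exact sub_eq_zero.mp h
  have hAunit : IsUnit A := Matrix.mulVec_injective_iff_isUnit.mp hinj
  have hdet : IsUnit A.det := (Matrix.isUnit_iff_isUnit_det A).mp hAunit
  have hAM : A * A⁻¹ = 1 := Matrix.mul_nonsing_inv A hdet
  set u : Fin n → ℝ := (Qbar * Q) *ᵥ dtil with hu
  set z : Fin n → ℝ := Qbar *ᵥ u with hz
  set v : Fin n → ℝ := A⁻¹ *ᵥ z with hv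
  have hAv : A *ᵥ v = z := by rw [hv, Matrix.mulVec_mulVec, hAM, Matrix.one_mulVec]
  have hovz : onesVec n ⬝ᵥ z = 0 := hovQbar u
  have hovv : onesVec n ⬝ᵥ v = 0 := by
    have h := hovA v
    rw [hAv] at h
    rw [← h]
    exact hovz
  obtain ⟨xhate, hxe⟩ := exists_preimage_of_ones_orth B hB ((γ / γe) • v)
      (by rw [dotProduct_smul, hovv, smul_zero])
  have hBT1 : Bᵀ *ᵥ onesVec n = 0 := by
    have h1 : onesVec n ∈ LinearMap.ker Bᵀ.mulVecLin := by
      rw [hB]; exact Submodule.mem_span_singleton_self _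
    rw [LinearMap.mem_ker, Matrix.mulVecLin_apply] at h1
    exact h1
  have hzz : (Qbar * Qbar * Q) *ᵥ dtil = z := by
    rw [hz, hu, Matrix.mulVec_mulVec, mul_assoc]
  have hxhatp' : xhatp = (γ / γp) • (Q *ᵥ v) := by
    rw [hxhatp, hzz, ← hv]
  refine ⟨xhate, ?_, ?_, ?_⟩
  · -- (i)
    rw [hxhat, Matrix.mulVec_smul, Matrix.mulVec_smul, ← Matrix.mulVec_mulVec,
      honesMul, Matrix.mulVec_smul, hBT1, smul_zero, smul_zero, smul_zero]
  · -- (ii)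
    rw [hxe, hxhatp', Matrix.mulVec_smul, hQinvQVec, smul_smul, smul_smul]
    have e1 : γe * (γ / γe) = γ := by field_simp
    have e2 : γp * (γ / γp) = γ := by field_simp
    rw [e1, e2, neg_add_cancel]
  · -- (iii)
    have hp : (1 - γ • (A⁻¹ * Qbar)) *ᵥ u = u - γ • v := by
      rw [Matrix.sub_mulVec, Matrix.one_mulVec, Matrix.smul_mulVec,
        ← Matrix.mulVec_mulVec, ← hz, ← hv]
    have hQbarQinv : s⁻¹ • (Qinv * onesMat n * Qinv) = Qbar + Qinv := by
      rw [hQbar]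
      abel
    have E1 : Qinv *ᵥ xhat = γc • ((Qbar + Qinv) *ᵥ (u - γ • v)) := by
      rw [hxhat, hp, Matrix.mulVec_smul, Matrix.mulVec_smul, Matrix.mulVec_mulVec,
        ← Matrix.smul_mulVec, ← mul_assoc, hQbarQinv]
    have hLcQ : Lc * Q = (n : ℝ)⁻¹ • onesMat n - Φ := by
      rw [hΦ]
      abel
    have E2 : Lc *ᵥ xhatp = -((γ / γp) • (Φ *ᵥ v)) := by
      have h1 : Lc *ᵥ (Q *ᵥ v) = -(Φ *ᵥ v) := by
        rw [Matrix.mulVec_mulVec, hLcQ, Matrix.sub_mulVec, Matrix.smul_mulVec,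
          honesMul, hovv, zero_smul, smul_zero, zero_sub]
      rw [hxhatp', Matrix.mulVec_smul, h1, smul_neg]
    have E4 : Φ *ᵥ v = Qbar *ᵥ (u - γ • v) := by
      have h1 : γ • (Qbar *ᵥ v) + Φ *ᵥ v = z := by
        rw [← hAv, hA, Matrix.add_mulVec, Matrix.smul_mulVec]
      have h2 : Φ *ᵥ v = z - γ • (Qbar *ᵥ v) := eq_sub_of_add_eq' h1
      rw [Matrix.mulVec_sub, Matrix.mulVec_smul, ← hz, h2]
    have E3 : γe • (B *ᵥ (xhate + xbare)) = -(u - γ • v) := by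
      rw [Matrix.mulVec_add, smul_add, hxe, hxbare, smul_smul]
      have e1 : γe * (γ / γe) = γ := by field_simp
      rw [e1]
      abel
    have hthird : (γp * γc * γe) • (Qinv *ᵥ (B *ᵥ (xhate + xbare)))
        = -((γp * γc) • (Qinv *ᵥ (u - γ • v))) := by
      have h1 : (γp * γc * γe) • (Qinv *ᵥ (B *ᵥ (xhate + xbare)))
          = (γp * γc) • (Qinv *ᵥ (γe • (B *ᵥ (xhate + xbare)))) := by
        rw [Matrix.mulVec_smul, smul_smul, mul_assoc]
      rw [h1, E3, Matrix.mulVec_neg, smul_neg]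
    have hc : γl * (γ / γp) = γp * γc := by
      rw [hγ]
      field_simp
    have hsecond : γl • (Lc *ᵥ xhatp) = -((γp * γc) • (Qbar *ᵥ (u - γ • v))) := by
      rw [E2, E4, smul_neg, smul_smul, hc]
    have hfirst : γp • (Qinv *ᵥ xhat) = (γp * γc) • ((Qbar + Qinv) *ᵥ (u - γ • v)) := by
      rw [E1, smul_smul]
    rw [hfirst, hsecond, hthird, Matrix.add_mulVec, smul_add]
    abel
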